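/- Let n ≥ 2 and m ≥ 1 be integers and define, for 1 < p < n, S̃(n,m,p) = (p*/n)(1 - 1/n) p^{-1/p} p'^{-1/p'} (ω_m Γ(m/p' + 1) / (ω_{n+m} Γ((n+m)/p' + 1)) · Γ(n)/Γ(n/p))^{1/n} with p' = p/(p-1) and p* = pn/(n-p), and C(n,m) = max{ (1/n)(m ω_m / ((n+m) ω_{n+m}))^{1/n}, 1/(n ω_n^{1/n}) }. Then lim_{p→1^+} S̃(n,m,p) = (1/n)(ω_m/ω_{n+m})^{1/n}, and moreover C(n,m) < (1/n)(ω_m/ω_{n+m})^{1/n}. -/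

import Mathlib

open Real Filter

/-- The Lebesgue volume of the unit ball in `ℝ^k`. -/
noncomputable def ballVol (k : ℕ) : ℝ := Real.pi ^ ((k : ℝ) / 2) / Real.Gamma ((k : ℝ) / 2 + 1)

/-- The constant `S̃(n,m,p)` from the `L^p`-Sobolev inequality for minimal submanifolds,
where `p' = p/(p-1)` and `p* = pn/(n-p)`. -/
noncomputable def tildeS (n m : ℕ) (p : ℝ) : ℝ :=
  ((p * n / ((n : ℝ) - p)) / n) * (1 - 1 / (n : ℝ)) * p ^ (-(1 : ℝ) / p) *
    (p / (p - 1)) ^ (-(1 : ℝ) / (p / (p - 1))) *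
    ((ballVol m * Real.Gamma ((m : ℝ) / (p / (p - 1)) + 1) /
          (ballVol (n + m) * Real.Gamma (((n : ℝ) + m) / (p / (p - 1)) + 1))) *
        (Real.Gamma (n : ℝ) / Real.Gamma ((n : ℝ) / p))) ^ ((1 : ℝ) / n)

/-- The Brendle constant. -/
noncomputable def Cnm (n m : ℕ) : ℝ :=
  max ((1 / (n : ℝ)) * ((m : ℝ) * ballVol m / (((n : ℝ) + m) * ballVol (n + m))) ^ ((1 : ℝ) / n))
    (1 / ((n : ℝ) * ballVol n ^ ((1 : ℝ) / n)))

lemma contAt_Gamma {x : ℝ} (hx : 0 < x) : ContinuousAt Real.Gamma x := by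
  refine (Real.differentiableAt_Gamma fun k => ?_).continuousAt
  have h0 : (0:ℝ) ≤ (k:ℝ) := k.cast_nonneg
  intro hc
  rw [hc] at hx
  linarith

lemma ballVol_pos (k : ℕ) : 0 < ballVol k := by
  have h : (0:ℝ) < (k : ℝ) / 2 + 1 := by positivity
  exact div_pos (Real.rpow_pos_of_pos Real.pi_pos _) (Real.Gamma_pos_of_pos h)

lemma gamma_mul_le {x y : ℝ} (hx : 1 ≤ x) (hy : 1 ≤ y) :
    Real.Gamma x * Real.Gamma y ≤ Real.Gamma (x + y - 1) := by
  rcases eq_or_lt_of_le hx with h1 | h1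
  · simp [← h1, Real.Gamma_one]
  rcases eq_or_lt_of_le hy with h2 | h2
  · simp [← h2, Real.Gamma_one]
  have hs : (0:ℝ) < x + y - 2 := by linarith
  set a : ℝ := (y - 1) / (x + y - 2) with ha
  set b : ℝ := (x - 1) / (x + y - 2) with hb
  have ha0 : 0 ≤ a := div_nonneg (by linarith) (by linarith)
  have hb0 : 0 ≤ b := div_nonneg (by linarith) (by linarith)
  have hab : a + b = 1 := by rw [ha, hb, ← add_div, show y - 1 + (x - 1) = x + y - 2 by ring, div_self hs.ne']
  have h1mem : (1:ℝ) ∈ Set.Ioi (0:ℝ) := by norm_num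
  have hzmem : x + y - 1 ∈ Set.Ioi (0:ℝ) := Set.mem_Ioi.mpr (by linarith)
  have key1 := Real.convexOn_log_Gamma.2 h1mem hzmem ha0 hb0 hab
  have key2 := Real.convexOn_log_Gamma.2 h1mem hzmem hb0 ha0 (by linarith [hab])
  have e1 : a • (1:ℝ) + b • (x + y - 1) = x := by
    simp only [smul_eq_mul, ha, hb]; field_simp; ring
  have e2 : b • (1:ℝ) + a • (x + y - 1) = y := by
    simp only [smul_eq_mul, ha, hb]; field_simp; ring
  rw [e1] at key1
  rw [e2] at key2
  simp only [Function.comp_apply, Real.Gamma_one, Real.log_one, smul_eq_mul, mul_zero,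
    zero_add] at key1 key2
  have hx0 : 0 < Real.Gamma x := Real.Gamma_pos_of_pos (by linarith)
  have hy0 : 0 < Real.Gamma y := Real.Gamma_pos_of_pos (by linarith)
  have hz0 : 0 < Real.Gamma (x + y - 1) := Real.Gamma_pos_of_pos (by linarith)
  have hsum : Real.log (Real.Gamma x * Real.Gamma y) ≤ Real.log (Real.Gamma (x + y - 1)) := by
    rw [Real.log_mul hx0.ne' hy0.ne']
    calc Real.log (Real.Gamma x) + Real.log (Real.Gamma y)
        ≤ b * Real.log (Real.Gamma (x + y - 1)) + a * Real.log (Real.Gamma (x + y - 1)) :=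
          add_le_add key1 key2
      _ = Real.log (Real.Gamma (x + y - 1)) := by rw [← add_mul, add_comm b a, hab, one_mul]
  exact (Real.log_le_log_iff (by positivity) hz0).mp hsum

lemma gamma_mul_lt {x y : ℝ} (hx : 1 < x) (hy : 2 ≤ y) :
    Real.Gamma x * Real.Gamma y < Real.Gamma (x + y - 1) := by
  have hy1 : (1:ℝ) ≤ y - 1 := by linarith
  have hG : Real.Gamma y = (y - 1) * Real.Gamma (y - 1) := by
    have := Real.Gamma_add_one (s := y - 1) (by linarith)
    simpa using this
  have hle : Real.Gamma x * Real.Gamma (y - 1) ≤ Real.Gamma (x + (y-1) - 1) :=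
    gamma_mul_le hx.le hy1
  have hz0 : 0 < Real.Gamma (x + y - 2) := Real.Gamma_pos_of_pos (by linarith)
  have hfin : Real.Gamma (x + y - 1) = (x + y - 2) * Real.Gamma (x + y - 2) := by
    have := Real.Gamma_add_one (s := x + y - 2) (ne_of_gt (by linarith))
    rw [show x + y - 2 + 1 = x + y - 1 by ring] at this
    exact this
  have hx0 : 0 < Real.Gamma x := Real.Gamma_pos_of_pos (by linarith)
  calc Real.Gamma x * Real.Gamma y = (y - 1) * (Real.Gamma x * Real.Gamma (y - 1)) := by
        rw [hG]; ring
    _ ≤ (y - 1) * Real.Gamma (x + (y - 1) - 1) := by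
        apply mul_le_mul_of_nonneg_left hle; linarith
    _ = (y - 1) * Real.Gamma (x + y - 2) := by ring_nf
    _ < (x + y - 2) * Real.Gamma (x + y - 2) := by
        apply mul_lt_mul_of_pos_right _ hz0; linarith
    _ = Real.Gamma (x + y - 1) := hfin.symm

theorem stmt_15 (n m : ℕ) (hn : 2 ≤ n) (hm : 1 ≤ m) :
    Filter.Tendsto (fun p : ℝ => tildeS n m p) (nhdsWithin 1 (Set.Ioi 1))
        (nhds ((1 / (n : ℝ)) * (ballVol m / ballVol (n + m)) ^ ((1 : ℝ) / n))) ∧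
      Cnm n m < (1 / (n : ℝ)) * (ballVol m / ballVol (n + m)) ^ ((1 : ℝ) / n) := by
  have hn0 : (0:ℝ) < (n:ℝ) := by positivity
  have hn1 : (1:ℝ) < (n:ℝ) := by exact_mod_cast lt_of_lt_of_le one_lt_two (by exact_mod_cast hn)
  have hnm0 : (0:ℝ) < (n:ℝ) + m := by positivity
  have hvm := ballVol_pos m
  have hvn := ballVol_pos n
  have hvnm := ballVol_pos (n + m)
  constructor
  · -- the limit
    have hg : Tendsto (fun p : ℝ => p / (p - 1)) (nhdsWithin 1 (Set.Ioi 1)) atTop := by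
      have h1 : Tendsto (fun p : ℝ => p - 1) (nhdsWithin 1 (Set.Ioi 1))
          (nhdsWithin 0 (Set.Ioi 0)) := by
        apply tendsto_nhdsWithin_of_tendsto_nhds_of_eventually_within
        · have : ContinuousAt (fun p : ℝ => p - 1) 1 := by fun_prop
          simpa using this.tendsto.mono_left nhdsWithin_le_nhds
        · filter_upwards [self_mem_nhdsWithin] with p hp
          simp only [Set.mem_Ioi] at hp ⊢; linarith
      have h2 : Tendsto (fun p : ℝ => (p - 1)⁻¹) (nhdsWithin 1 (Set.Ioi 1)) atTop :=
        tendsto_inv_nhdsGT_zero.comp h1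
      have h3 : Tendsto (fun p : ℝ => p) (nhdsWithin 1 (Set.Ioi 1)) (nhds 1) :=
        tendsto_id.mono_left nhdsWithin_le_nhds
      simpa [div_eq_mul_inv] using Filter.Tendsto.pos_mul_atTop one_pos h3 h2
    have hF1 : Tendsto (fun p : ℝ => ((p * n / ((n : ℝ) - p)) / n) * (1 - 1 / (n : ℝ)))
        (nhdsWithin 1 (Set.Ioi 1)) (nhds (((1 * n / ((n : ℝ) - 1)) / n) * (1 - 1 / (n : ℝ)))) := by
      have : ContinuousAt (fun p : ℝ => ((p * n / ((n : ℝ) - p)) / n) * (1 - 1 / (n : ℝ))) 1 := by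
        have hne : (n:ℝ) - 1 ≠ 0 := by linarith
        fun_prop (disch := simp_all)
      exact this.tendsto.mono_left nhdsWithin_le_nhds
    have hF2 : Tendsto (fun p : ℝ => p ^ (-(1 : ℝ) / p)) (nhdsWithin 1 (Set.Ioi 1)) (nhds 1) := by
      have : ContinuousAt (fun p : ℝ => p ^ (-(1 : ℝ) / p)) 1 := by
        apply ContinuousAt.rpow continuousAt_id
          (continuousAt_const.div continuousAt_id one_ne_zero) (Or.inl one_ne_zero)
      have h := this.tendsto.mono_left (nhdsWithin_le_nhds (s := Set.Ioi (1:ℝ)))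
      simpa using h
    have hF3 : Tendsto (fun p : ℝ => (p / (p - 1)) ^ (-(1 : ℝ) / (p / (p - 1))))
        (nhdsWithin 1 (Set.Ioi 1)) (nhds 1) := tendsto_rpow_neg_div.comp hg
    have hBase : Tendsto (fun p : ℝ =>
        (ballVol m * Real.Gamma ((m : ℝ) / (p / (p - 1)) + 1) /
          (ballVol (n + m) * Real.Gamma (((n : ℝ) + m) / (p / (p - 1)) + 1))) *
        (Real.Gamma (n : ℝ) / Real.Gamma ((n : ℝ) / p)))
        (nhdsWithin 1 (Set.Ioi 1)) (nhds (ballVol m / ballVol (n + m))) := by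
      have hGn : (0:ℝ) < Real.Gamma (n:ℝ) := Real.Gamma_pos_of_pos hn0
      have hA : Tendsto (fun p : ℝ => Real.Gamma ((m : ℝ) / (p / (p - 1)) + 1))
          (nhdsWithin 1 (Set.Ioi 1)) (nhds 1) := by
        have h0 : Tendsto (fun p : ℝ => (m : ℝ) / (p / (p - 1)) + 1)
            (nhdsWithin 1 (Set.Ioi 1)) (nhds 1) := by
          have := (tendsto_const_nhds (x := (m:ℝ))).div_atTop hg
          simpa using this.add (tendsto_const_nhds (x := (1:ℝ)))
        have := (contAt_Gamma one_pos).tendsto.comp h0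
        rw [Real.Gamma_one] at this; exact this
      have hB : Tendsto (fun p : ℝ => Real.Gamma (((n : ℝ) + m) / (p / (p - 1)) + 1))
          (nhdsWithin 1 (Set.Ioi 1)) (nhds 1) := by
        have h0 : Tendsto (fun p : ℝ => ((n : ℝ) + m) / (p / (p - 1)) + 1)
            (nhdsWithin 1 (Set.Ioi 1)) (nhds 1) := by
          have := (tendsto_const_nhds (x := ((n:ℝ) + m))).div_atTop hg
          simpa using this.add (tendsto_const_nhds (x := (1:ℝ)))
        have := (contAt_Gamma one_pos).tendsto.comp h0
        rw [Real.Gamma_one] at this; exact this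
      have hC : Tendsto (fun p : ℝ => Real.Gamma ((n : ℝ) / p))
          (nhdsWithin 1 (Set.Ioi 1)) (nhds (Real.Gamma (n:ℝ))) := by
        have h0 : Tendsto (fun p : ℝ => (n : ℝ) / p) (nhdsWithin 1 (Set.Ioi 1))
            (nhds (n:ℝ)) := by
          have : ContinuousAt (fun p : ℝ => (n : ℝ) / p) 1 := by
            fun_prop (disch := norm_num)
          simpa using this.tendsto.mono_left nhdsWithin_le_nhds
        exact (contAt_Gamma hn0).tendsto.comp h0
      have h1 : Tendsto (fun p : ℝ =>
          ballVol m * Real.Gamma ((m : ℝ) / (p / (p - 1)) + 1) /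
            (ballVol (n + m) * Real.Gamma (((n : ℝ) + m) / (p / (p - 1)) + 1)))
          (nhdsWithin 1 (Set.Ioi 1)) (nhds (ballVol m / ballVol (n + m))) := by
        have := ((tendsto_const_nhds (x := ballVol m)).mul hA).div
          ((tendsto_const_nhds (x := ballVol (n + m))).mul hB) (by simp [hvnm.ne'])
        rw [mul_one, mul_one] at this; exact this
      have h2 : Tendsto (fun p : ℝ => Real.Gamma (n : ℝ) / Real.Gamma ((n : ℝ) / p))
          (nhdsWithin 1 (Set.Ioi 1)) (nhds 1) := by
        have := (tendsto_const_nhds (x := Real.Gamma (n:ℝ))).div hC hGn.ne'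
        rw [div_self hGn.ne'] at this; exact this
      simpa using h1.mul h2
    have hF4 : Tendsto (fun p : ℝ =>
        ((ballVol m * Real.Gamma ((m : ℝ) / (p / (p - 1)) + 1) /
          (ballVol (n + m) * Real.Gamma (((n : ℝ) + m) / (p / (p - 1)) + 1))) *
        (Real.Gamma (n : ℝ) / Real.Gamma ((n : ℝ) / p))) ^ ((1 : ℝ) / n))
        (nhdsWithin 1 (Set.Ioi 1))
        (nhds ((ballVol m / ballVol (n + m)) ^ ((1 : ℝ) / n))) :=
      hBase.rpow_const (Or.inl (by positivity))
    have htot := ((hF1.mul hF2).mul hF3).mul hF4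
    have heq : ((1 * (n:ℝ) / ((n : ℝ) - 1)) / n) * (1 - 1 / (n : ℝ)) * 1 * 1 *
        ((ballVol m / ballVol (n + m)) ^ ((1 : ℝ) / n))
        = (1 / (n : ℝ)) * (ballVol m / ballVol (n + m)) ^ ((1 : ℝ) / n) := by
      have hne : (n:ℝ) - 1 ≠ 0 := by linarith
      field_simp
    rw [heq] at htot
    exact htot
  · -- the strict inequality
    rw [Cnm, max_lt_iff]
    constructor
    · apply mul_lt_mul_of_pos_left _ (by positivity)
      apply Real.rpow_lt_rpow (by positivity) _ (by positivity)
      rw [div_lt_div_iff₀ (by positivity) (by positivity)]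
      have hmlt : (m:ℝ) < (n:ℝ) + m := by linarith
      calc (m:ℝ) * ballVol m * ballVol (n + m)
          < ((n:ℝ) + m) * ballVol m * ballVol (n + m) := by
            apply mul_lt_mul_of_pos_right (mul_lt_mul_of_pos_right hmlt hvm) hvnm
        _ = ballVol m * (((n:ℝ) + m) * ballVol (n + m)) := by ring
    · -- 1/(n ω_n^{1/n}) < (1/n)(ω_m/ω_{n+m})^{1/n}
      have key : ballVol (n + m) < ballVol m * ballVol n := by
        have hgam : Real.Gamma ((m:ℝ)/2 + 1) * Real.Gamma ((n:ℝ)/2 + 1) <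
            Real.Gamma (((n:ℝ) + m)/2 + 1) := by
          have hm1 : (1:ℝ) < (m:ℝ)/2 + 1 := by
            have : (1:ℝ) ≤ (m:ℝ) := by exact_mod_cast hm
            linarith
          have hn2 : (2:ℝ) ≤ (n:ℝ)/2 + 1 := by
            have : (2:ℝ) ≤ (n:ℝ) := by exact_mod_cast hn
            linarith
          have := gamma_mul_lt hm1 hn2
          rw [show (m:ℝ)/2 + 1 + ((n:ℝ)/2 + 1) - 1 = ((n:ℝ) + m)/2 + 1 by ring] at this
          exact this
        have hpis : Real.pi ^ (((n:ℝ) + m) / 2) =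
            Real.pi ^ ((m:ℝ) / 2) * Real.pi ^ ((n:ℝ) / 2) := by
          rw [← Real.rpow_add Real.pi_pos]; ring_nf
        unfold ballVol
        push_cast
        rw [hpis, div_mul_div_comm, div_lt_div_iff₀
          (Real.Gamma_pos_of_pos (by positivity)) (by positivity)]
        calc Real.pi ^ ((m:ℝ)/2) * Real.pi ^ ((n:ℝ)/2) *
              (Real.Gamma ((m:ℝ)/2 + 1) * Real.Gamma ((n:ℝ)/2 + 1))
            < Real.pi ^ ((m:ℝ)/2) * Real.pi ^ ((n:ℝ)/2) * Real.Gamma (((n:ℝ) + m)/2 + 1) := by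
              apply mul_lt_mul_of_pos_left hgam (by positivity)
          _ = Real.pi ^ ((m:ℝ)/2) * Real.pi ^ ((n:ℝ)/2) * Real.Gamma (((n:ℝ) + m)/2 + 1) := rfl
      have hratio : (1:ℝ) / ballVol n < ballVol m / ballVol (n + m) := by
        rw [div_lt_div_iff₀ hvn hvnm]
        linarith [key]
      have hrpow : ((1:ℝ) / ballVol n) ^ ((1:ℝ)/n) <
          (ballVol m / ballVol (n + m)) ^ ((1:ℝ)/n) :=
        Real.rpow_lt_rpow (by positivity) hratio (by positivity)
      have hleft : (1:ℝ) / ((n : ℝ) * ballVol n ^ ((1 : ℝ) / n))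
          = (1 / (n:ℝ)) * ((1:ℝ) / ballVol n) ^ ((1:ℝ)/n) := by
        rw [Real.div_rpow (by norm_num) hvn.le, Real.one_rpow]
        field_simp
      rw [hleft]
      exact mul_lt_mul_of_pos_left hrpow (by positivity)
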